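/- Let n ≥ 2, U = {1,…,n}, let S = (S_1,…,S_m) be a family of nonempty subsets of U, and let k ≤ m. Define trees P and T as follows. P has a center vertex p with 3n⁴ pendant leaves; additionally p is adjacent to the centers of stars R_1,…,R_n (where R_i has exactly i leaves), X_1,…,X_{m−k} (each with n³ leaves), and Y_1,…,Y_k (each with n² leaves). T has a center vertex t with 3n⁴ pendant leaves; additionally t is adjacent to vertices t_1,…,t_m, where each t_i has n³ pendant leaves, one neighbour for each s ∈ S_i that is the center of a star with s leaves, and one further neighbour that is the center of a star with n² leaves. If P is a minor of T, then the Inclusive Set Cover instance ⟨U, S, k⟩ is a yes-instance. -/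

import Mathlib

/-- Inclusive Set Cover: ground set `{1,…,n}`, family `S` indexed by `ι`, budget `k`.
The instance is a yes-instance if some subfamily `R` with `|R| ≤ k` admits a surjection `f`
from the disjoint union `⊔_{i∈R} S_i` onto `{1,…,n}` with `f (v,i) ≤ v` everywhere. -/
def InclusiveSetCoverYes {ι : Type*} (n : ℕ) (S : ι → Finset ℕ) (k : ℕ) : Prop :=
  ∃ (R : Finset ι) (f : {p : ℕ × ι // p.2 ∈ R ∧ p.1 ∈ S p.2} → {u : ℕ // u ∈ Finset.Icc 1 n}),
    R.card ≤ k ∧ Function.Surjective f ∧ ∀ p, (f p : ℕ) ≤ p.1.1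

/-- A minor embedding of `P` in `T`: a surjective `f : V(T) → V(P)` with connected preimages
of vertices such that every edge of `P` is realized by an edge of `T`. -/
def IsMinorEmbedding {V W : Type*} (T : SimpleGraph V) (P : SimpleGraph W) (f : V → W) : Prop :=
  Function.Surjective f ∧
  (∀ w : W, ((T.induce (f ⁻¹' {w})).Connected)) ∧
  (∀ ⦃u v : W⦄, P.Adj u v → ∃ u' v', T.Adj u' v' ∧ f u' = u ∧ f v' = v)

/-- Vertices of the pattern tree `P`: a center `p` with `3n⁴` pendant leaves, adjacent to the
centers of stars `R_1,…,R_n` (`R_i` having `i` leaves, the index `i : Fin n` standing for the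
1-based value `i+1`), `X_1,…,X_{m−k}` (each with `n³` leaves), and `Y_1,…,Y_k` (each with `n²`
leaves). -/
inductive PVert (n m k : ℕ) : Type
  | p : PVert n m k
  | pleaf : Fin (3*n^4) → PVert n m k
  | rcenter : Fin n → PVert n m k
  | rleaf : (i : Fin n) → Fin (i.val + 1) → PVert n m k
  | xcenter : Fin (m - k) → PVert n m k
  | xleaf : Fin (m - k) → Fin (n^3) → PVert n m k
  | ycenter : Fin k → PVert n m k
  | yleaf : Fin k → Fin (n^2) → PVert n m k

/-- Base adjacency relation for the tree `P`. -/
def PRel (n m k : ℕ) : PVert n m k → PVert n m k → Prop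
  | .p, .pleaf _ => True
  | .p, .rcenter _ => True
  | .p, .xcenter _ => True
  | .p, .ycenter _ => True
  | .rcenter i, .rleaf i' _ => i = i'
  | .xcenter i, .xleaf i' _ => i = i'
  | .ycenter i, .yleaf i' _ => i = i'
  | _, _ => False

/-- The tree `P`. -/
def Pgraph (n m k : ℕ) : SimpleGraph (PVert n m k) := SimpleGraph.fromRel (PRel n m k)

/-- Vertices of the host tree `T`: a center `t` with `3n⁴` pendant leaves, adjacent to
`t_1,…,t_m`, where each `t_i` has `n³` pendant leaves, for every `s ∈ S_i` a neighbour which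
is the center of a star with `s` leaves, and one further neighbour which is the center of a
star with `n²` leaves. -/
inductive TVert (n m : ℕ) (S : Fin m → Finset ℕ) : Type
  | t : TVert n m S
  | tleaf : Fin (3*n^4) → TVert n m S
  | ti : Fin m → TVert n m S
  | tileaf : Fin m → Fin (n^3) → TVert n m S
  | scenter : (i : Fin m) → {s : ℕ // s ∈ S i} → TVert n m S
  | sleaf : (i : Fin m) → (s : {s : ℕ // s ∈ S i}) → Fin s.val → TVert n m S
  | ycenter : Fin m → TVert n m S
  | yleaf : Fin m → Fin (n^2) → TVert n m S

/-- Base adjacency relation for the tree `T`. -/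
def TRel (n m : ℕ) (S : Fin m → Finset ℕ) : TVert n m S → TVert n m S → Prop
  | .t, .tleaf _ => True
  | .t, .ti _ => True
  | .ti i, .tileaf i' _ => i = i'
  | .ti i, .scenter i' _ => i = i'
  | .ti i, .ycenter i' => i = i'
  | .scenter i s, .sleaf i' s' _ => i = i' ∧ (s : ℕ) = (s' : ℕ)
  | .ycenter i, .yleaf i' _ => i = i'
  | _, _ => False

/-- The tree `T`. -/
def Tgraph (n m : ℕ) (S : Fin m → Finset ℕ) : SimpleGraph (TVert n m S) :=
  SimpleGraph.fromRel (TRel n m S)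


namespace SetCoverAux

variable {n m k : ℕ} {S : Fin m → Finset ℕ}

def Tparent : TVert n m S → TVert n m S
  | .t => .t
  | .tleaf _ => .t
  | .ti _ => .t
  | .tileaf i _ => .ti i
  | .scenter i _ => .ti i
  | .sleaf i s _ => .scenter i s
  | .ycenter i => .ti i
  | .yleaf i _ => .ycenter i

def isAnc (r v : TVert n m S) : Prop :=
  r = v ∨ r = Tparent v ∨ r = Tparent (Tparent v) ∨ r = Tparent (Tparent (Tparent v))

lemma p3_eq_t (v : TVert n m S) : Tparent (Tparent (Tparent v)) = .t := by
  cases v <;> rfl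

lemma isAnc_refl (v : TVert n m S) : isAnc v v := Or.inl rfl

lemma isAnc_parent {r v : TVert n m S} (h : isAnc r (Tparent v)) : isAnc r v := by
  rcases h with h | h | h | h
  · exact Or.inr (Or.inl h)
  · exact Or.inr (Or.inr (Or.inl h))
  · exact Or.inr (Or.inr (Or.inr h))
  · rw [p3_eq_t, ← p3_eq_t v] at h
    exact Or.inr (Or.inr (Or.inr h))

lemma isAnc_t_eq {r : TVert n m S} (h : isAnc r .t) : r = .t := by
  rcases h with h | h | h | h <;> simpa [Tparent] using h

lemma TRel_parent {u v : TVert n m S} (h : TRel n m S u v) : v ≠ .t ∧ u = Tparent v := by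
  cases u <;> cases v <;> simp_all [TRel, Tparent] <;>
    (try obtain ⟨rfl, h2⟩ := h) <;> exact heq_of_eq (Subtype.ext h2)

lemma parent_TRel {v : TVert n m S} (h : v ≠ .t) : TRel n m S (Tparent v) v := by
  cases v <;> simp_all [TRel, Tparent]

lemma parent_ne {v : TVert n m S} (h : v ≠ .t) : Tparent v ≠ v := by
  cases v <;> simp_all [Tparent]

lemma adj_iff {u v : TVert n m S} :
    (Tgraph n m S).Adj u v ↔ ((v ≠ .t ∧ u = Tparent v) ∨ (u ≠ .t ∧ v = Tparent u)) := by
  rw [Tgraph, SimpleGraph.fromRel_adj]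
  constructor
  · rintro ⟨hne, h | h⟩
    · exact Or.inl ⟨(TRel_parent h).1, (TRel_parent h).2⟩
    · exact Or.inr ⟨(TRel_parent h).1, (TRel_parent h).2⟩
  · rintro (⟨hv, rfl⟩ | ⟨hu, rfl⟩)
    · exact ⟨parent_ne hv, Or.inl (parent_TRel hv)⟩
    · exact ⟨fun e => parent_ne hu e.symm, Or.inr (parent_TRel hu)⟩

lemma boundary {r u v : TVert n m S} (h : (Tgraph n m S).Adj u v)
    (hv : isAnc r v) (hu : ¬ isAnc r u) : v = r ∧ u = Tparent r := by
  rcases adj_iff.mp h with ⟨hvt, rfl⟩ | ⟨hut, rfl⟩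
  · rcases hv with h1 | h1 | h1 | h1
    · exact ⟨h1.symm, by rw [h1]⟩
    · exact absurd (Or.inl h1) hu
    · exact absurd (Or.inr (Or.inl h1)) hu
    · exact absurd (Or.inr (Or.inr (Or.inl h1))) hu
  · exact absurd (isAnc_parent hv) hu

lemma walk_cross {r b : TVert n m S} {a : TVert n m S} (W : (Tgraph n m S).Walk a b) :
    isAnc r a → ¬ isAnc r b → r ∈ W.support ∧ Tparent r ∈ W.support := by
  induction W with
  | nil => intro ha hb; exact absurd ha hb
  | @cons a c b' hadj W ih =>
    intro ha hb
    by_cases hc : isAnc r c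
    · obtain ⟨h1, h2⟩ := ih hc hb
      exact ⟨by rw [SimpleGraph.Walk.support_cons]; exact List.mem_cons_of_mem _ h1,
             by rw [SimpleGraph.Walk.support_cons]; exact List.mem_cons_of_mem _ h2⟩
    · obtain ⟨h1, h2⟩ := boundary hadj.symm ha hc
      refine ⟨by rw [SimpleGraph.Walk.support_cons, h1]; exact List.mem_cons_self,
             by rw [SimpleGraph.Walk.support_cons]; exact List.mem_cons_of_mem _ (h2 ▸ W.start_mem_support)⟩

section Part2
variable {f : TVert n m S → PVert n m k}

lemma cross_mem (hconn : ∀ w, ((Tgraph n m S).induce (f ⁻¹' {w})).Connected)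
    {w : PVert n m k} {a b r : TVert n m S}
    (ha : f a = w) (hb : f b = w) (h1 : isAnc r a) (h2 : ¬ isAnc r b) :
    f r = w ∧ f (Tparent r) = w := by
  have hA : a ∈ f ⁻¹' {w} := ha
  have hB : b ∈ f ⁻¹' {w} := hb
  obtain ⟨W⟩ := (hconn w).preconnected ⟨a, hA⟩ ⟨b, hB⟩
  let W' := W.map (SimpleGraph.Embedding.induce _).toHom
  have hsupp : ∀ v ∈ W'.support, f v = w := by
    intro v hv
    rw [SimpleGraph.Walk.support_map] at hv
    obtain ⟨⟨x, hx⟩, _, rfl⟩ := List.mem_map.mp hv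
    exact hx
  obtain ⟨hr, hpr⟩ := walk_cross W' h1 h2
  exact ⟨hsupp _ hr, hsupp _ hpr⟩

lemma contain (hconn : ∀ w, ((Tgraph n m S).induce (f ⁻¹' {w})).Connected)
    {w : PVert n m k} {a r : TVert n m S}
    (ha : f a = w) (h1 : isAnc r a) (hp : f (Tparent r) ≠ w) :
    ∀ b, f b = w → isAnc r b := by
  intro b hb
  by_contra h2
  exact hp (cross_mem hconn ha hb h1 h2).2

end Part2

def anc1 : TVert n m S → TVert n m S
  | .t => .t
  | .tleaf j => .tleaf j
  | .ti i => .ti i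
  | .tileaf i _ => .ti i
  | .scenter i _ => .ti i
  | .sleaf i _ _ => .ti i
  | .ycenter i => .ti i
  | .yleaf i _ => .ti i

def anc2 : TVert n m S → TVert n m S
  | .sleaf i s _ => .scenter i s
  | .yleaf i _ => .ycenter i
  | v => v

lemma anc1_isAnc (v : TVert n m S) : isAnc (anc1 v) v := by
  cases v <;> simp [isAnc, anc1, Tparent]

lemma anc1_parent {v : TVert n m S} (h : v ≠ .t) : Tparent (anc1 v) = .t := by
  cases v <;> simp_all [anc1, Tparent]

lemma anc1_cases {x : TVert n m S} (hxt : x ≠ .t) (hx1 : x ≠ anc1 x) :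
    ∃ i, anc1 x = .ti i := by
  cases x with
  | t => exact absurd rfl hxt
  | tleaf j => exact absurd rfl hx1
  | ti i => exact absurd rfl hx1
  | tileaf i l => exact ⟨_, rfl⟩
  | scenter i s => exact ⟨_, rfl⟩
  | sleaf i s l => exact ⟨_, rfl⟩
  | ycenter i => exact ⟨_, rfl⟩
  | yleaf i l => exact ⟨_, rfl⟩

lemma anc2_isAnc (v : TVert n m S) : isAnc (anc2 v) v := by
  cases v <;> simp [isAnc, anc2, Tparent]

lemma anc2_parent {i : Fin m} {x : TVert n m S} (h1 : isAnc (.ti i) x) (h2 : x ≠ .ti i) :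
    Tparent (anc2 x) = .ti i := by
  cases x <;> simp_all [isAnc, anc2, Tparent]

lemma anc2_deep_parent {x : TVert n m S} (h : x ≠ anc2 x) : Tparent x = anc2 x := by
  cases x <;> first | (exact absurd rfl h) | rfl

lemma anc2_deep_noparent {x : TVert n m S} (h : x ≠ anc2 x) (z : TVert n m S) :
    Tparent z ≠ x := by
  cases x <;> first | (exact absurd rfl h) | (cases z <;> simp [Tparent])

lemma notParent_isAnc {r v : TVert n m S} (hnp : ∀ z, Tparent z ≠ r) (hrt : r ≠ .t)
    (h : isAnc r v) : v = r := by
  rcases h with h | h | h | h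
  · exact h.symm
  · exact absurd h.symm (hnp v)
  · exact absurd h.symm (hnp _)
  · rw [p3_eq_t] at h; exact absurd h hrt

lemma anc_sc {i : Fin m} {s : {s : ℕ // s ∈ S i}} {v : TVert n m S}
    (h : isAnc (.scenter i s) v) : v = .scenter i s ∨ ∃ l, v = .sleaf i s l := by
  cases v with
  | scenter i' s' =>
    left
    simp only [isAnc, Tparent] at h
    rcases h with h | h | h | h
    · exact h.symm
    · exact nomatch h
    · exact nomatch h
    · exact nomatch h
  | sleaf i' s' l =>
    right
    simp only [isAnc, Tparent] at h
    rcases h with h | h | h | h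
    · exact nomatch h
    · injection h with h1 h2
      subst h1
      obtain rfl : s = s' := eq_of_heq h2
      exact ⟨l, rfl⟩
    · exact nomatch h
    · exact nomatch h
  | t => simp only [isAnc, Tparent] at h; rcases h with h|h|h|h <;> exact nomatch h
  | tleaf j => simp only [isAnc, Tparent] at h; rcases h with h|h|h|h <;> exact nomatch h
  | ti i' => simp only [isAnc, Tparent] at h; rcases h with h|h|h|h <;> exact nomatch h
  | tileaf i' l => simp only [isAnc, Tparent] at h; rcases h with h|h|h|h <;> exact nomatch h
  | ycenter i' => simp only [isAnc, Tparent] at h; rcases h with h|h|h|h <;> exact nomatch h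
  | yleaf i' l => simp only [isAnc, Tparent] at h; rcases h with h|h|h|h <;> exact nomatch h

lemma anc_yc {i : Fin m} {v : TVert n m S}
    (h : isAnc (.ycenter i) v) : v = .ycenter i ∨ ∃ l : Fin (n^2), v = .yleaf i l := by
  cases v with
  | ycenter i' =>
    left
    simp only [isAnc, Tparent] at h
    rcases h with h | h | h | h
    · exact h.symm
    · exact nomatch h
    · exact nomatch h
    · exact nomatch h
  | yleaf i' l =>
    right
    simp only [isAnc, Tparent] at h
    rcases h with h | h | h | h
    · exact nomatch h
    · injection h with h1
      subst h1
      exact ⟨l, rfl⟩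
    · exact nomatch h
    · exact nomatch h
  | t => simp only [isAnc, Tparent] at h; rcases h with h|h|h|h <;> exact nomatch h
  | tleaf j => simp only [isAnc, Tparent] at h; rcases h with h|h|h|h <;> exact nomatch h
  | ti i' => simp only [isAnc, Tparent] at h; rcases h with h|h|h|h <;> exact nomatch h
  | tileaf i' l => simp only [isAnc, Tparent] at h; rcases h with h|h|h|h <;> exact nomatch h
  | scenter i' s' => simp only [isAnc, Tparent] at h; rcases h with h|h|h|h <;> exact nomatch h
  | sleaf i' s' l => simp only [isAnc, Tparent] at h; rcases h with h|h|h|h <;> exact nomatch h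

lemma anc_ti_cases {i : Fin m} {v : TVert n m S} (h : isAnc (.ti i) v) :
    v = .ti i ∨ (∃ l, v = .tileaf i l) ∨ (∃ s, v = .scenter i s) ∨
    (∃ s l, v = .sleaf i s l) ∨ v = .ycenter i ∨ (∃ l, v = .yleaf i l) := by
  cases v with
  | t => simp only [isAnc, Tparent] at h; rcases h with h|h|h|h <;> exact nomatch h
  | tleaf j => simp only [isAnc, Tparent] at h; rcases h with h|h|h|h <;> exact nomatch h
  | ti i' =>
    simp only [isAnc, Tparent] at h
    rcases h with h | h | h | h
    · exact Or.inl h.symm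
    · exact nomatch h
    · exact nomatch h
    · exact nomatch h
  | tileaf i' l =>
    simp only [isAnc, Tparent] at h
    rcases h with h | h | h | h
    · exact nomatch h
    · injection h with h1; subst h1; exact Or.inr (Or.inl ⟨l, rfl⟩)
    · exact nomatch h
    · exact nomatch h
  | scenter i' s' =>
    simp only [isAnc, Tparent] at h
    rcases h with h | h | h | h
    · exact nomatch h
    · injection h with h1; subst h1; exact Or.inr (Or.inr (Or.inl ⟨s', rfl⟩))
    · exact nomatch h
    · exact nomatch h
  | sleaf i' s' l =>
    simp only [isAnc, Tparent] at h
    rcases h with h | h | h | h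
    · exact nomatch h
    · exact nomatch h
    · injection h with h1; subst h1; exact Or.inr (Or.inr (Or.inr (Or.inl ⟨s', l, rfl⟩)))
    · exact nomatch h
  | ycenter i' =>
    simp only [isAnc, Tparent] at h
    rcases h with h | h | h | h
    · exact nomatch h
    · injection h with h1; subst h1; exact Or.inr (Or.inr (Or.inr (Or.inr (Or.inl rfl))))
    · exact nomatch h
    · exact nomatch h
  | yleaf i' l =>
    simp only [isAnc, Tparent] at h
    rcases h with h | h | h | h
    · exact nomatch h
    · exact nomatch h
    · injection h with h1; subst h1; exact Or.inr (Or.inr (Or.inr (Or.inr (Or.inr ⟨l, rfl⟩))))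
    · exact nomatch h
section Part3
variable {f : TVert n m S → PVert n m k}

lemma consume (hsurj : Function.Surjective f)
    (hconn : ∀ w, ((Tgraph n m S).induce (f ⁻¹' {w})).Connected)
    (hadj : ∀ ⦃u v : PVert n m k⦄, (Pgraph n m k).Adj u v →
      ∃ u' v', (Tgraph n m S).Adj u' v' ∧ f u' = u ∧ f v' = v)
    (hft : f .t = .p) {w lv0 : PVert n m k}
    (hw : (Pgraph n m k).Adj .p w) (hl : (Pgraph n m k).Adj w lv0) (hl0 : lv0 ≠ .p) :
    ∃ v0, f v0 = w ∧ (∀ b, f b = w → isAnc v0 b) ∧ f (Tparent v0) = .p := by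
  have hwp : w ≠ .p := Ne.symm hw.ne
  obtain ⟨x, hx⟩ := hsurj w
  have hxt : x ≠ .t := fun e => hwp (by rw [← hx, e, hft])
  have h1a := anc1_isAnc x
  have h1p := anc1_parent hxt
  have hB1 : ∀ b, f b = w → isAnc (anc1 x) b :=
    contain hconn hx h1a (by rw [h1p, hft]; exact Ne.symm hwp)
  by_cases h1 : f (anc1 x) = w
  · exact ⟨anc1 x, h1, hB1, by rw [h1p, hft]⟩
  · have hx1 : x ≠ anc1 x := fun e => h1 (by rw [← e]; exact hx)
    obtain ⟨i, hi⟩ := anc1_cases hxt hx1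
    have h1a' : isAnc (.ti i) x := by rw [← hi]; exact h1a
    have hx1' : x ≠ .ti i := by rw [← hi]; exact hx1
    have h2p : Tparent (anc2 x) = .ti i := anc2_parent h1a' hx1'
    have hfti : f (.ti i) ≠ w := by rw [← hi]; exact h1
    have h2a := anc2_isAnc x
    have hB2 : ∀ b, f b = w → isAnc (anc2 x) b :=
      contain hconn hx h2a (by rw [h2p]; exact hfti)
    by_cases h2 : f (anc2 x) = w
    · refine ⟨anc2 x, h2, hB2, ?_⟩
      obtain ⟨u', v', huv, hu', hv'⟩ := hadj hw
      have hvdesc : isAnc (anc2 x) v' := hB2 v' hv'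
      by_cases huc : isAnc (anc2 x) u'
      · exfalso
        have hct : ¬ isAnc (anc2 x) (.t : TVert n m S) := by
          intro hh
          have he := isAnc_t_eq hh
          rw [he, hft] at h2
          exact hwp h2.symm
        have hcm := cross_mem hconn hu' hft huc hct
        rw [h2] at hcm
        exact hwp hcm.1
      · have hb := boundary huv hvdesc huc
        have he : u' = .ti i := by rw [hb.2, h2p]
        rw [h2p, ← he]
        exact hu'
    · have hx2 : x ≠ anc2 x := fun e => h2 (by rw [← e]; exact hx)
      have hpx : Tparent x = anc2 x := anc2_deep_parent hx2
      have hnp : ∀ z, Tparent z ≠ x := anc2_deep_noparent hx2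
      have hBx : ∀ b, f b = w → b = x := by
        intro b hb
        by_contra hbx
        have hnb : ¬ isAnc x b := by
          intro hh
          rcases hh with h' | h' | h' | h'
          · exact hbx h'.symm
          · exact hnp _ h'.symm
          · exact hnp _ h'.symm
          · rw [p3_eq_t] at h'; exact hxt h'
        have hcm := cross_mem hconn hx hb (isAnc_refl x) hnb
        rw [hpx] at hcm
        exact h2 hcm.2
      exfalso
      obtain ⟨u', v', huv, hu', hv'⟩ := hadj hl
      have hux : u' = x := hBx u' hu'
      have hv'c : v' = anc2 x := by
        rcases adj_iff.mp huv with ⟨hvt, he⟩ | ⟨hut, he⟩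
        · rw [hux] at he; exact absurd he.symm (hnp v')
        · rw [he, hux, hpx]
      obtain ⟨u'', v'', huv2, hu2, hv2⟩ := hadj hw
      have hvx : v'' = x := hBx v'' hv2
      have hu''c : u'' = anc2 x := by
        rcases adj_iff.mp huv2 with ⟨hvt, he⟩ | ⟨hut, he⟩
        · rw [hvx] at he; rw [he, hpx]
        · rw [hvx] at he; exact absurd he.symm (hnp u'')
      have e1 : f (anc2 x) = lv0 := by rw [← hv'c]; exact hv'
      have e2 : f (anc2 x) = .p := by rw [← hu''c]; exact hu2
      exact hl0 (by rw [← e1, e2])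

lemma rep
    (hadj : ∀ ⦃u v : PVert n m k⦄, (Pgraph n m k).Adj u v →
      ∃ u' v', (Tgraph n m S).Adj u' v' ∧ f u' = u ∧ f v' = v)
    {w lvl : PVert n m k} {v0 : TVert n m S}
    (hv0 : f v0 = w) (hcont : ∀ b, f b = w → isAnc v0 b) (hpar : f (Tparent v0) = .p)
    (hl : (Pgraph n m k).Adj w lvl) (hlp : lvl ≠ .p) :
    ∃ v', f v' = lvl ∧ isAnc v0 v' ∧ v' ≠ v0 := by
  obtain ⟨u', v', huv, hu', hv'⟩ := hadj hl
  have hlw : lvl ≠ w := Ne.symm hl.ne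
  by_cases h : isAnc v0 v'
  · refine ⟨v', hv', h, fun e => hlw ?_⟩
    rw [← hv', e, hv0]
  · exfalso
    have hb := boundary huv.symm (hcont u' hu') h
    have he : f (Tparent v0) = lvl := by rw [← hb.2]; exact hv'
    exact hlp (he.symm.trans hpar)

lemma shape
    (hadj : ∀ ⦃u v : PVert n m k⦄, (Pgraph n m k).Adj u v →
      ∃ u' v', (Tgraph n m S).Adj u' v' ∧ f u' = u ∧ f v' = v)
    (hft : f .t = .p) {w : PVert n m k} {q : ℕ} (lv : Fin q → PVert n m k)
    (hq : 0 < q) (hlv : ∀ l, (Pgraph n m k).Adj w (lv l)) (hinj : Function.Injective lv)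
    (hlp : ∀ l, lv l ≠ .p) (hw : (Pgraph n m k).Adj .p w) {v0 : TVert n m S}
    (hv0 : f v0 = w) (hcont : ∀ b, f b = w → isAnc v0 b) (hpar : f (Tparent v0) = .p) :
    (∃ i, v0 = .ti i) ∨ (∃ i s, v0 = .scenter i s ∧ q ≤ (s : ℕ)) ∨
      (∃ i, v0 = .ycenter i ∧ q ≤ n^2) := by
  have hrepall : ∀ l, ∃ v', f v' = lv l ∧ isAnc v0 v' ∧ v' ≠ v0 :=
    fun l => rep hadj hv0 hcont hpar (hlv l) (hlp l)
  choose vf hf1 hf2 hf3 using hrepall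
  have hvt : v0 ≠ .t := by
    intro e; rw [e, hft] at hv0; exact hw.ne hv0
  have hleaf : (∀ z, Tparent z ≠ v0) → False := by
    intro hnp
    exact hf3 ⟨0, hq⟩ (notParent_isAnc hnp hvt (hf2 ⟨0, hq⟩))
  cases v0 with
  | t => exact absurd rfl hvt
  | tleaf j => exact (hleaf (fun z => by cases z <;> simp [Tparent])).elim
  | tileaf i l => exact (hleaf (fun z => by cases z <;> simp [Tparent])).elim
  | sleaf i s l => exact (hleaf (fun z => by cases z <;> simp [Tparent])).elim
  | yleaf i l => exact (hleaf (fun z => by cases z <;> simp [Tparent])).elim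
  | ti i => exact Or.inl ⟨i, rfl⟩
  | scenter i s =>
    refine Or.inr (Or.inl ⟨i, s, rfl, ?_⟩)
    have hsl : ∀ l, ∃ l' : Fin s.val, vf l = .sleaf i s l' := by
      intro l
      rcases anc_sc (hf2 l) with h | h
      · exact absurd h (hf3 l)
      · exact h
    choose θ hθ using hsl
    have hθinj : Function.Injective θ := by
      intro a b hab
      apply hinj
      have he : vf a = vf b := by rw [hθ a, hθ b, hab]
      rw [← hf1 a, ← hf1 b, he]
    simpa using Fintype.card_le_of_injective θ hθinj
  | ycenter i =>
    refine Or.inr (Or.inr ⟨i, rfl, ?_⟩)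
    have hsl : ∀ l, ∃ l' : Fin (n^2), vf l = .yleaf i l' := by
      intro l
      rcases anc_yc (hf2 l) with h | h
      · exact absurd h (hf3 l)
      · exact h
    choose θ hθ using hsl
    have hθinj : Function.Injective θ := by
      intro a b hab
      apply hinj
      have he : vf a = vf b := by rw [hθ a, hθ b, hab]
      rw [← hf1 a, ← hf1 b, he]
    simpa using Fintype.card_le_of_injective θ hθinj

end Part3

def code (hs : ∀ (i : Fin m) (s : ℕ), s ∈ S i → 1 ≤ s ∧ s ≤ n) (hn0 : 0 < n) :
    TVert n m S → Option (Unit ⊕ Fin (n^3) ⊕ (Fin n × Option (Fin n)) ⊕ Unit ⊕ Fin (n^2))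
  | .t => some (Sum.inl ())
  | .tleaf _ => none
  | .ti _ => none
  | .tileaf _ l => some (Sum.inr (Sum.inl l))
  | .scenter _ s => some (Sum.inr (Sum.inr (Sum.inl
      (⟨s.val - 1, by have := hs _ _ s.2; omega⟩, none))))
  | .sleaf _ s l => some (Sum.inr (Sum.inr (Sum.inl
      (⟨s.val - 1, by have := hs _ _ s.2; omega⟩,
       some ⟨l.val, lt_of_lt_of_le l.isLt (hs _ _ s.2).2⟩))))
  | .ycenter _ => some (Sum.inr (Sum.inr (Sum.inr (Sum.inl ()))))
  | .yleaf _ l => some (Sum.inr (Sum.inr (Sum.inr (Sum.inr l))))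

set_option maxHeartbeats 1000000 in
lemma code_inj (hs : ∀ (i : Fin m) (s : ℕ), s ∈ S i → 1 ≤ s ∧ s ≤ n) (hn0 : 0 < n)
    {i : Fin m} {u v : TVert n m S}
    (hu : isAnc (.ti i) u ∨ u = .t) (hv : isAnc (.ti i) v ∨ v = .t)
    (h : code hs hn0 u = code hs hn0 v) : u = v := by
  have hu2 : u = .ti i ∨ (∃ l, u = .tileaf i l) ∨ (∃ s, u = .scenter i s) ∨
      (∃ s l, u = .sleaf i s l) ∨ u = .ycenter i ∨ (∃ l, u = .yleaf i l) ∨ u = .t := by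
    rcases hu with hu | rfl
    · rcases anc_ti_cases hu with a | ⟨l, a⟩ | ⟨s, a⟩ | ⟨s, l, a⟩ | a | ⟨l, a⟩
      · exact Or.inl a
      · exact Or.inr (Or.inl ⟨l, a⟩)
      · exact Or.inr (Or.inr (Or.inl ⟨s, a⟩))
      · exact Or.inr (Or.inr (Or.inr (Or.inl ⟨s, l, a⟩)))
      · exact Or.inr (Or.inr (Or.inr (Or.inr (Or.inl a))))
      · exact Or.inr (Or.inr (Or.inr (Or.inr (Or.inr (Or.inl ⟨l, a⟩)))))
    · exact Or.inr (Or.inr (Or.inr (Or.inr (Or.inr (Or.inr rfl)))))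
  have hv2 : v = .ti i ∨ (∃ l, v = .tileaf i l) ∨ (∃ s, v = .scenter i s) ∨
      (∃ s l, v = .sleaf i s l) ∨ v = .ycenter i ∨ (∃ l, v = .yleaf i l) ∨ v = .t := by
    rcases hv with hv | rfl
    · rcases anc_ti_cases hv with a | ⟨l, a⟩ | ⟨s, a⟩ | ⟨s, l, a⟩ | a | ⟨l, a⟩
      · exact Or.inl a
      · exact Or.inr (Or.inl ⟨l, a⟩)
      · exact Or.inr (Or.inr (Or.inl ⟨s, a⟩))
      · exact Or.inr (Or.inr (Or.inr (Or.inl ⟨s, l, a⟩)))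
      · exact Or.inr (Or.inr (Or.inr (Or.inr (Or.inl a))))
      · exact Or.inr (Or.inr (Or.inr (Or.inr (Or.inr (Or.inl ⟨l, a⟩)))))
    · exact Or.inr (Or.inr (Or.inr (Or.inr (Or.inr (Or.inr rfl)))))
  clear hu hv
  rcases hu2 with rfl | ⟨l1, rfl⟩ | ⟨s1, rfl⟩ | ⟨s1, l1, rfl⟩ | rfl | ⟨l1, rfl⟩ | rfl <;>
    rcases hv2 with rfl | ⟨l2, rfl⟩ | ⟨s2, rfl⟩ | ⟨s2, l2, rfl⟩ | rfl | ⟨l2, rfl⟩ | rfl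
  all_goals try (simp only [code, Option.some.injEq, Sum.inr.injEq, Sum.inl.injEq,
    Prod.mk.injEq, Fin.mk.injEq, and_true, reduceCtorEq] at h)
  all_goals try rfl
  all_goals try (rw [h])
  all_goals try (exact h.2.elim)
  all_goals first
    | (have e : (s1 : ℕ) = (s2 : ℕ) := by
         have a1 := (hs _ _ s1.2).1
         have a2 := (hs _ _ s2.2).1
         omega
       obtain rfl : s1 = s2 := Subtype.ext e
       rfl)
    | (obtain ⟨hA, hB⟩ := h
       have e : (s1 : ℕ) = (s2 : ℕ) := by
         have a1 := (hs _ _ s1.2).1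
         have a2 := (hs _ _ s2.2).1
         omega
       obtain rfl : s1 = s2 := Subtype.ext e
       obtain rfl : l1 = l2 := Fin.ext hB
       rfl)

lemma Padj_p_pleaf (j : Fin (3*n^4)) : (Pgraph n m k).Adj .p (.pleaf j) := by
  rw [Pgraph, SimpleGraph.fromRel_adj]; exact ⟨by simp, Or.inl trivial⟩

lemma Padj_p_rcenter (i : Fin n) : (Pgraph n m k).Adj .p (.rcenter i) := by
  rw [Pgraph, SimpleGraph.fromRel_adj]; exact ⟨by simp, Or.inl trivial⟩

lemma Padj_p_xcenter (i : Fin (m - k)) : (Pgraph n m k).Adj .p (.xcenter i) := by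
  rw [Pgraph, SimpleGraph.fromRel_adj]; exact ⟨by simp, Or.inl trivial⟩

lemma Padj_p_ycenter (i : Fin k) : (Pgraph n m k).Adj .p (.ycenter i) := by
  rw [Pgraph, SimpleGraph.fromRel_adj]; exact ⟨by simp, Or.inl trivial⟩

lemma Padj_rcenter_rleaf (i : Fin n) (l : Fin (i.val + 1)) :
    (Pgraph n m k).Adj (.rcenter i) (.rleaf i l) := by
  rw [Pgraph, SimpleGraph.fromRel_adj]; exact ⟨by simp, Or.inl rfl⟩

lemma Padj_xcenter_xleaf (i : Fin (m - k)) (l : Fin (n^3)) :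
    (Pgraph n m k).Adj (.xcenter i) (.xleaf i l) := by
  rw [Pgraph, SimpleGraph.fromRel_adj]; exact ⟨by simp, Or.inl rfl⟩

lemma Padj_ycenter_yleaf (i : Fin k) (l : Fin (n^2)) :
    (Pgraph n m k).Adj (.ycenter i) (.yleaf i l) := by
  rw [Pgraph, SimpleGraph.fromRel_adj]; exact ⟨by simp, Or.inl rfl⟩

lemma scenter_congr {i i' : Fin m} {s : {s : ℕ // s ∈ S i}} {s' : {s : ℕ // s ∈ S i'}}
    (h : i = i') (h2 : (s : ℕ) = (s' : ℕ)) :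
    (TVert.scenter i s : TVert n m S) = .scenter i' s' := by
  subst h; congr 1; exact Subtype.ext h2

end SetCoverAux


open SetCoverAux in
/-- If `P` is a minor of `T` (with `n ≥ 2`, all `S_i` nonempty subsets of `{1,…,n}`, and
`k ≤ m`), then the Inclusive Set Cover instance `⟨{1,…,n}, S, k⟩` is a yes-instance. -/
theorem stmt_4 {n m k : ℕ} (hn : 2 ≤ n) (S : Fin m → Finset ℕ)
    (hS : ∀ i, (S i).Nonempty ∧ S i ⊆ Finset.Icc 1 n) (hk : k ≤ m)
    (hminor : ∃ f : TVert n m S → PVert n m k,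
      IsMinorEmbedding (Tgraph n m S) (Pgraph n m k) f) :
    InclusiveSetCoverYes n S k := by
  classical
  obtain ⟨f, hsurj, hconn, hadj⟩ := hminor
  have hn0 : 0 < n := by omega
  have hs : ∀ (i : Fin m) (s : ℕ), s ∈ S i → 1 ≤ s ∧ s ≤ n := by
    intro i s h
    have := (hS i).2 h
    simpa [Finset.mem_Icc] using this
  have hn4 : 16 ≤ n^4 := by
    calc (16:ℕ) = 2^4 := by norm_num
    _ ≤ n^4 := Nat.pow_le_pow_left hn 4
  have g1 : 2*n ≤ n^2 := by
    have h := Nat.mul_le_mul_right n hn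
    have e : n*n = n^2 := by ring
    rw [e] at h; exact h
  have g2 : 2*n^2 ≤ n^3 := by
    have h := Nat.mul_le_mul_right (n^2) hn
    have e : n*n^2 = n^3 := by ring
    rw [e] at h; exact h
  have g3 : 2*n^3 ≤ n^4 := by
    have h := Nat.mul_le_mul_right (n^3) hn
    have e : n*n^3 = n^4 := by ring
    rw [e] at h; exact h
  -- Step A : the center of T maps to the center of P
  have hft : f .t = .p := by
    by_contra h0
    obtain ⟨x, hx⟩ := hsurj .p
    have hxt : x ≠ .t := fun e => h0 (by rw [← e]; exact hx)
    have hca := anc1_isAnc x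
    have hcp := anc1_parent hxt
    have hBp : ∀ b, f b = .p → isAnc (anc1 x) b :=
      contain hconn hx hca (by rw [hcp]; exact h0)
    have hrep : ∀ j : Fin (3*n^4), ∃ v', f v' = .pleaf j ∧
        (isAnc (anc1 x) v' ∨ v' = .t) := by
      intro j
      obtain ⟨u', v', huv, hu', hv'⟩ := hadj (Padj_p_pleaf j)
      by_cases hvc : isAnc (anc1 x) v'
      · exact ⟨v', hv', Or.inl hvc⟩
      · have hb := boundary huv.symm (hBp u' hu') hvc
        exact ⟨v', hv', Or.inr (by rw [hb.2, hcp])⟩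
    choose vp hvp1 hvp2 using hrep
    have hvpinj : Function.Injective vp := by
      intro a b h
      have e := hvp1 a
      rw [h, hvp1 b] at e
      injection e with e1
      exact e1.symm
    have hshape : (∃ j0, anc1 x = (.tleaf j0 : TVert n m S)) ∨ (∃ i, anc1 x = .ti i) := by
      cases x with
      | t => exact absurd rfl hxt
      | tleaf j => exact Or.inl ⟨j, rfl⟩
      | ti i => exact Or.inr ⟨i, rfl⟩
      | tileaf i l => exact Or.inr ⟨i, rfl⟩
      | scenter i s => exact Or.inr ⟨i, rfl⟩
      | sleaf i s l => exact Or.inr ⟨i, rfl⟩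
      | ycenter i => exact Or.inr ⟨i, rfl⟩
      | yleaf i l => exact Or.inr ⟨i, rfl⟩
    rcases hshape with ⟨j0, hj0⟩ | ⟨i, hi⟩
    · have hxeq : x = .tleaf j0 := by
        have hca' := hca
        rw [hj0] at hca'
        exact notParent_isAnc (fun z => by cases z <;> simp [Tparent]) (by simp) hca'
      have hfp : f (.tleaf j0) = .p := by rw [← hxeq]; exact hx
      have hvt : ∀ j : Fin (3*n^4), vp j = .t := by
        intro j
        rcases hvp2 j with hh | hh
        · exfalso
          rw [hj0] at hh
          have he := notParent_isAnc (fun z => by cases z <;> simp [Tparent]) (by simp) hh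
          have e := hvp1 j
          rw [he, hfp] at e
          exact nomatch e
        · exact hh
      have h01 : (⟨0, by omega⟩ : Fin (3*n^4)) = ⟨1, by omega⟩ := hvpinj (by rw [hvt, hvt])
      simp at h01
    · have hθinj : Function.Injective (fun j : Fin (3*n^4) => code hs hn0 (vp j)) := by
        intro a b h
        exact hvpinj (code_inj hs hn0 (i := i) (by rw [← hi]; exact hvp2 a)
          (by rw [← hi]; exact hvp2 b) h)
      have hcard := Fintype.card_le_of_injective _ hθinj
      simp [Fintype.card_option, Fintype.card_sum, Fintype.card_prod] at hcard
      have a4 : n*(n+1) = n^2 + n := by ring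
      linarith
  -- X-centers each consume a full t_i
  have hX : ∀ j : Fin (m-k), ∃ i : Fin m, f (.ti i) = .xcenter j := by
    intro j
    obtain ⟨v0, hv0, hcont, hpar⟩ := consume hsurj hconn hadj hft
      (Padj_p_xcenter j) (Padj_xcenter_xleaf j ⟨0, pow_pos hn0 3⟩) (by simp)
    rcases shape hadj hft (fun l : Fin (n^3) => .xleaf j l) (pow_pos hn0 3)
      (fun l => Padj_xcenter_xleaf j l) (fun a b h => by simpa using h) (fun l => by simp)
      (Padj_p_xcenter j) hv0 hcont hpar with ⟨i, rfl⟩ | ⟨i, s, rfl, hqs⟩ | ⟨i, rfl, hqs⟩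
    · exact ⟨i, hv0⟩
    · exfalso
      have := (hs i s.1 s.2).2
      linarith
    · exfalso; linarith
  choose xi hxi using hX
  -- Y-centers consume a full t_i or a y-star
  have hY : ∀ j : Fin k, ∃ i : Fin m,
      f (.ti i) = .ycenter j ∨ (f (.ycenter i) = .ycenter j ∧ f (.ti i) = .p) := by
    intro j
    obtain ⟨v0, hv0, hcont, hpar⟩ := consume hsurj hconn hadj hft
      (Padj_p_ycenter j) (Padj_ycenter_yleaf j ⟨0, pow_pos hn0 2⟩) (by simp)
    rcases shape hadj hft (fun l : Fin (n^2) => .yleaf j l) (pow_pos hn0 2)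
      (fun l => Padj_ycenter_yleaf j l) (fun a b h => by simpa using h) (fun l => by simp)
      (Padj_p_ycenter j) hv0 hcont hpar with ⟨i, rfl⟩ | ⟨i, s, rfl, hqs⟩ | ⟨i, rfl, hqs⟩
    · exact ⟨i, Or.inl hv0⟩
    · exfalso
      have := (hs i s.1 s.2).2
      linarith
    · exact ⟨i, Or.inr ⟨hv0, hpar⟩⟩
  choose yi hyi using hY
  -- no R-center can consume a full t_i or a y-star
  have hnobad : ∀ u : Fin n, ¬ ∃ i0 : Fin m,
      f (.ti i0) = .rcenter u ∨ (f (.ycenter i0) = .rcenter u ∧ f (.ti i0) = .p) := by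
    rintro u ⟨i0, hbad⟩
    have hginj : Function.Injective
        (Sum.elim xi (Sum.elim yi (fun _ : Unit => i0)) : Fin (m-k) ⊕ Fin k ⊕ Unit → Fin m) := by
      rintro (a | b | c) (a' | b' | c') h <;> simp only [Sum.elim_inl, Sum.elim_inr] at h
      · have e := hxi a; rw [h, hxi a'] at e; injection e with e1; rw [e1]
      · rcases hyi b' with hy | ⟨hy1, hy2⟩
        · have e := hxi a; rw [h, hy] at e; exact nomatch e
        · have e := hxi a; rw [h, hy2] at e; exact nomatch e
      · rcases hbad with hb | ⟨hb1, hb2⟩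
        · have e := hxi a; rw [h, hb] at e; exact nomatch e
        · have e := hxi a; rw [h, hb2] at e; exact nomatch e
      · rcases hyi b with hy | ⟨hy1, hy2⟩
        · have e := hxi a'; rw [← h, hy] at e; exact nomatch e
        · have e := hxi a'; rw [← h, hy2] at e; exact nomatch e
      · rcases hyi b with hy | ⟨hy1, hy2⟩ <;> rcases hyi b' with hy' | ⟨hy1', hy2'⟩
        · rw [h, hy'] at hy; injection hy with e1; rw [e1]
        · rw [h, hy2'] at hy; exact nomatch hy
        · rw [h, hy'] at hy2; exact nomatch hy2
        · rw [h, hy1'] at hy1; injection hy1 with e1; rw [e1]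
      · rcases hyi b with hy | ⟨hy1, hy2⟩ <;> rcases hbad with hb | ⟨hb1, hb2⟩
        · rw [h, hb] at hy; exact nomatch hy
        · rw [h, hb2] at hy; exact nomatch hy
        · rw [h, hb] at hy2; exact nomatch hy2
        · rw [h, hb1] at hy1; exact nomatch hy1
      · rcases hbad with hb | ⟨hb1, hb2⟩
        · have e := hxi a'; rw [← h, hb] at e; exact nomatch e
        · have e := hxi a'; rw [← h, hb2] at e; exact nomatch e
      · rcases hyi b' with hy | ⟨hy1, hy2⟩ <;> rcases hbad with hb | ⟨hb1, hb2⟩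
        · rw [← h, hb] at hy; exact nomatch hy
        · rw [← h, hb2] at hy; exact nomatch hy
        · rw [← h, hb] at hy2; exact nomatch hy2
        · rw [← h, hb1] at hy1; exact nomatch hy1
      · rfl
    have hcard := Fintype.card_le_of_injective _ hginj
    simp at hcard
    omega
  -- R-centers sit in s-stars
  have hRgood : ∀ u : Fin n, ∃ (i : Fin m) (s : {s : ℕ // s ∈ S i}),
      f (.scenter i s) = .rcenter u ∧ f (.ti i) = .p ∧ u.val + 1 ≤ s.val := by
    intro u
    obtain ⟨v0, hv0, hcont, hpar⟩ := consume hsurj hconn hadj hft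
      (Padj_p_rcenter u) (Padj_rcenter_rleaf u ⟨0, Nat.succ_pos _⟩) (by simp)
    rcases shape hadj hft (fun l : Fin (u.val+1) => .rleaf u l) (Nat.succ_pos _)
      (fun l => Padj_rcenter_rleaf u l) (fun a b h => by simpa using h) (fun l => by simp)
      (Padj_p_rcenter u) hv0 hcont hpar with ⟨i, rfl⟩ | ⟨i, s, rfl, hqs⟩ | ⟨i, rfl, hqs⟩
    · exact absurd ⟨i, Or.inl hv0⟩ (hnobad u)
    · exact ⟨i, s, hv0, hpar, hqs⟩
    · exact absurd ⟨i, Or.inr ⟨hv0, hpar⟩⟩ (hnobad u)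
  choose ru su hru1 hru2 hru3 using hRgood
  have hkey : ∀ u u' : Fin n, ru u = ru u' → (su u : ℕ) = (su u' : ℕ) → u = u' := by
    intro u u' e1 e2
    have hv := scenter_congr (n := n) (S := S) e1 e2
    have e := hru1 u
    rw [hv, hru1 u'] at e
    injection e with e3
    exact e3.symm
  set R := Finset.image ru Finset.univ with hRdef
  have hXinj : Function.Injective xi := by
    intro a b h
    have e := hxi a
    rw [h, hxi b] at e
    injection e with e1
    exact e1.symm
  have hdis : Disjoint R (Finset.image xi Finset.univ) := by
    rw [Finset.disjoint_left]
    rintro a ha hb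
    obtain ⟨u, -, rfl⟩ := Finset.mem_image.mp ha
    obtain ⟨j, -, hj⟩ := Finset.mem_image.mp hb
    have e := hxi j
    rw [hj, hru2 u] at e
    exact nomatch e
  have hcardU : (R ∪ Finset.image xi Finset.univ).card ≤ m := by
    have h := Finset.card_le_univ (R ∪ Finset.image xi Finset.univ)
    simpa using h
  rw [Finset.card_union_of_disjoint hdis] at hcardU
  have hXcard : (Finset.image xi Finset.univ).card = m - k := by
    rw [Finset.card_image_of_injective _ hXinj, Finset.card_univ, Fintype.card_fin]
  have hRcard : R.card ≤ k := by omega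
  refine ⟨R, fun x => if h : ∃ u : Fin n, ru u = x.1.2 ∧ ((su u : ℕ) = x.1.1) then
      ⟨h.choose.val + 1, by
        have := h.choose.isLt
        rw [Finset.mem_Icc]
        omega⟩
    else ⟨1, by rw [Finset.mem_Icc]; omega⟩, hRcard, ?_, ?_⟩
  · -- surjectivity
    rintro ⟨a, ha⟩
    rw [Finset.mem_Icc] at ha
    have hu0 : a - 1 < n := by omega
    have hmem1 : ru ⟨a-1, hu0⟩ ∈ R := Finset.mem_image_of_mem _ (Finset.mem_univ _)
    refine ⟨⟨((su ⟨a-1, hu0⟩ : ℕ), ru ⟨a-1, hu0⟩), hmem1, (su ⟨a-1, hu0⟩).2⟩, ?_⟩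
    have hcond : ∃ u : Fin n, ru u = ru ⟨a-1, hu0⟩ ∧ ((su u : ℕ) = (su ⟨a-1, hu0⟩ : ℕ)) :=
      ⟨⟨a-1, hu0⟩, rfl, rfl⟩
    dsimp only
    rw [dif_pos hcond]
    have spec := hcond.choose_spec
    have hch : hcond.choose = ⟨a-1, hu0⟩ := hkey _ _ spec.1 spec.2
    apply Subtype.ext
    simp only [hch]
    show a - 1 + 1 = a
    omega
  · -- inclusivity
    rintro ⟨⟨s0, i0⟩, hm1, hm2⟩
    dsimp only
    split
    next h =>
      have spec := h.choose_spec
      have h3 := hru3 h.choose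
      show h.choose.val + 1 ≤ s0
      omega
    next h =>
      exact (hs i0 s0 hm2).1
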